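/- arXiv:2403.09351 — 5 statements merged into one kernel-verified Lean document; each statement's English description precedes it below -/
import Mathlib

section
/- The variance of the aggregated genuine frequency satisfies Var[f̃_X̃(v)] = q(1 − q)/(n (p − q)²) + f_X(v)(1 − p − q)/(n (p − q)) for every item v ∈ D, provided the perturbed reports X̃₁,…,X̃ₙ are independent, where f_X(v) = |{i : xᵢ = v}|/n. (This is the variance σ_x̃² in Lemma 2 of the paper, instantiated for GRR.) -/
open MeasureTheory Real ProbabilityTheory
open scoped Classical

lemma integral_ite_mem {Ω : Type*} [MeasurableSpace Ω] (μ : Measure Ω)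
    [IsProbabilityMeasure μ] {s : Set Ω} (hs : MeasurableSet s) (a b : ℝ) :
    ∫ ω, (if ω ∈ s then a else b) ∂μ
      = a * (μ s).toReal + b * (1 - (μ s).toReal) := by
  have h : (fun ω => if ω ∈ s then a else b)
      = fun ω => s.indicator (fun _ => a - b) ω + b := by
    funext ω; by_cases h : ω ∈ s <;> simp [h]
  rw [h, integral_add ((integrable_const (a - b)).indicator hs) (integrable_const b),
    integral_indicator_const _ hs, integral_const]
  simp [measure_univ, Measure.real]
  ring

lemma variance_ite_mem {Ω : Type*} [MeasurableSpace Ω] (μ : Measure Ω)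
    [IsProbabilityMeasure μ] {s : Set Ω} (hs : MeasurableSet s) (a b : ℝ) :
    variance (fun ω => if ω ∈ s then a else b) μ
      = (μ s).toReal * (1 - (μ s).toReal) * (a - b) ^ 2 := by
  have hmeas : Measurable (fun ω => if ω ∈ s then a else b) :=
    Measurable.ite hs measurable_const measurable_const
  have hmem : MemLp (fun ω => if ω ∈ s then a else b) 2 μ := by
    refine MemLp.of_bound hmeas.aestronglyMeasurable (max ‖a‖ ‖b‖) (ae_of_all _ fun ω => ?_)
    by_cases h : ω ∈ s
    · rw [if_pos h]; exact le_max_left _ _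
    · rw [if_neg h]; exact le_max_right _ _
  rw [variance_eq_sub hmem]
  have hsq : ((fun ω => if ω ∈ s then a else b) ^ 2)
      = fun ω => if ω ∈ s then a ^ 2 else b ^ 2 := by
    funext ω; by_cases h : ω ∈ s <;> simp [h]
  rw [hsq, integral_ite_mem μ hs, integral_ite_mem μ hs]
  ring

/-- variance of the aggregated genuine frequency under GRR. -/
theorem genuine_frequency_variance
    (d : ℕ) (hd : 2 ≤ d) (ε : ℝ) (hε : 0 < ε)
    (p q : ℝ) (hp : p = Real.exp ε / (d - 1 + Real.exp ε))
    (hq : q = 1 / (d - 1 + Real.exp ε))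
    {Ω : Type*} [MeasurableSpace Ω] (μ : Measure Ω) [IsProbabilityMeasure μ]
    (n : ℕ) (hn : 1 ≤ n)
    (x : Fin n → Fin d)
    (X : Fin n → Ω → Fin d) (hXmeas : ∀ i, Measurable (X i))
    (hXlaw : ∀ i, ∀ b : Fin d,
      μ {ω | X i ω = b} = ENNReal.ofReal (if b = x i then p else q))
    (hXindep : iIndepFun X μ)
    (v : Fin d)
    (fX : ℝ) (hfX : fX = ((Finset.univ.filter (fun i => x i = v)).card : ℝ) / n) :
    variance (fun ω => (1 / (n : ℝ)) *
        ∑ i : Fin n, ((if X i ω = v then (1 : ℝ) else 0) - q) / (p - q)) μ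
      = q * (1 - q) / (n * (p - q) ^ 2) + fX * (1 - p - q) / (n * (p - q)) := by
  -- basic facts about p and q
  have hD : (0 : ℝ) < (d : ℝ) - 1 + Real.exp ε := by
    have : (2 : ℝ) ≤ (d : ℝ) := by exact_mod_cast hd
    nlinarith [Real.exp_pos ε]
  have hq0 : 0 < q := by rw [hq]; positivity
  have hp0 : 0 < p := by rw [hp]; positivity
  have hexp : (1 : ℝ) < Real.exp ε := by nlinarith [Real.add_one_le_exp ε]
  have hpq : q < p := by
    rw [hp, hq]
    exact (div_lt_div_iff_of_pos_right hD).mpr hexp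
  have hpqne : p - q ≠ 0 := sub_ne_zero.2 hpq.ne'
  have hn0 : (0 : ℝ) < n := by exact_mod_cast hn
  -- the individual transformed variables
  set g : Fin d → ℝ := fun b => ((if b = v then (1 : ℝ) else 0) - q) / (p - q) with hg
  set Y : Fin n → Ω → ℝ := fun i ω => g (X i ω) with hY
  -- measurable sets
  have hsmeas : ∀ i, MeasurableSet {ω | X i ω = v} := fun i =>
    (hXmeas i) (measurableSet_singleton v)
  -- the probability r i
  set r : Fin n → ℝ := fun i => if x i = v then p else q with hr
  have hrval : ∀ i, (μ {ω | X i ω = v}).toReal = r i := by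
    intro i
    by_cases h : x i = v
    · rw [hXlaw i v, if_pos h.symm, ENNReal.toReal_ofReal hp0.le, hr]
      simp [h]
    · rw [hXlaw i v, if_neg (fun hh => h hh.symm), ENNReal.toReal_ofReal hq0.le, hr]
      simp [h]
  -- description of Y i as an if-then-else
  have hYite : ∀ i, Y i = fun ω => if ω ∈ {ω | X i ω = v}
      then (1 - q) / (p - q) else (0 - q) / (p - q) := by
    intro i; funext ω
    by_cases h : X i ω = v
    · simp only [hY, hg, Set.mem_setOf_eq, h, if_pos]
    · simp only [hY, hg, Set.mem_setOf_eq, h, if_false, if_neg h]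
  -- variance of each Y i
  have hYvar : ∀ i, variance (Y i) μ = r i * (1 - r i) / (p - q) ^ 2 := by
    intro i
    have hv : variance (Y i) μ
        = (μ {ω | X i ω = v}).toReal * (1 - (μ {ω | X i ω = v}).toReal)
          * ((1 - q) / (p - q) - (0 - q) / (p - q)) ^ 2 := by
      rw [hYite i]
      convert variance_ite_mem μ (hsmeas i) ((1 - q) / (p - q)) ((0 - q) / (p - q)) using 2
      refine funext fun ω => ?_
      congr
    rw [hv, hrval i]
    field_simp
    ring
  -- measurability and Memℒp
  have hYmeas : ∀ i, Measurable (Y i) := by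
    intro i
    rw [hYite i]
    exact Measurable.ite (hsmeas i) measurable_const measurable_const
  have hYmem : ∀ i, MemLp (Y i) 2 μ := by
    intro i
    refine MemLp.of_bound (hYmeas i).aestronglyMeasurable
      (max ‖(1 - q) / (p - q)‖ ‖(0 - q) / (p - q)‖) (ae_of_all _ fun ω => ?_)
    rw [hYite i]
    by_cases h : ω ∈ {ω | X i ω = v}
    · simp only [if_pos h]; exact le_max_left _ _
    · simp only [if_neg h]; exact le_max_right _ _
  -- independence of the Y i
  have hYindep : iIndepFun Y μ :=
    hXindep.comp (fun _ => g) (fun _ => measurable_from_top)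
  -- put things together
  have hfun : (fun ω => (1 / (n : ℝ)) *
        ∑ i : Fin n, ((if X i ω = v then (1 : ℝ) else 0) - q) / (p - q))
      = fun ω => (1 / (n : ℝ)) * (∑ i : Fin n, Y i) ω := by
    funext ω
    simp [hY, hg, Finset.sum_apply]
  rw [hfun, variance_const_mul, IndepFun.variance_sum (fun i _ => hYmem i)
    (fun i _ j _ hij => hYindep.indepFun hij)]
  simp_rw [hYvar]
  -- compute the sum
  have hsum : ∑ i : Fin n, r i * (1 - r i) / (p - q) ^ 2
      = (((Finset.univ.filter (fun i => x i = v)).card : ℝ) * (p * (1 - p))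
        + ((n : ℝ) - (Finset.univ.filter (fun i => x i = v)).card) * (q * (1 - q)))
        / (p - q) ^ 2 := by
    rw [← Finset.sum_div]
    congr 1
    rw [← Finset.sum_filter_add_sum_filter_not Finset.univ (fun i => x i = v)]
    have h1 : ∀ i ∈ Finset.univ.filter (fun i => x i = v), r i * (1 - r i) = p * (1 - p) := by
      intro i hi
      simp only [Finset.mem_filter] at hi
      simp [hr, hi.2]
    have h2 : ∀ i ∈ Finset.univ.filter (fun i => ¬ x i = v),
        r i * (1 - r i) = q * (1 - q) := by
      intro i hi
      simp only [Finset.mem_filter] at hi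
      simp [hr, hi.2]
    rw [Finset.sum_congr rfl h1, Finset.sum_congr rfl h2, Finset.sum_const, Finset.sum_const]
    have hcard : ((Finset.univ.filter (fun i => ¬ x i = v)).card : ℝ)
        = (n : ℝ) - (Finset.univ.filter (fun i => x i = v)).card := by
      have h' : (Finset.univ.filter (fun i => x i = v)).card
          + (Finset.univ.filter (fun i => ¬ x i = v)).card = n := by
        simpa using Finset.card_filter_add_card_filter_not
          (s := (Finset.univ : Finset (Fin n))) (p := fun i => x i = v)
      have := congrArg (fun m : ℕ => (m : ℝ)) h'
      push_cast at this
      linarith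
    simp only [nsmul_eq_mul]
    rw [hcard]
  rw [hsum, hfX]
  set k : ℝ := ((Finset.univ.filter (fun i => x i = v)).card : ℝ)
  field_simp
  ring
end

section
/- (Theorem 2, unbiasedness of the genuine frequency estimator.) Suppose each genuine report X̃ᵢ satisfies Pr[X̃ᵢ = xᵢ] = p and Pr[X̃ᵢ = b] = q for b ≠ xᵢ. Let η = m/n. Then for every item v ∈ D, the recovery estimator (1+η)·f̃_Z(v) − η·f̃_Y(v) has expectation equal to the true genuine frequency: E[(1+η)·f̃_Z(v) − η·f̃_Y(v)] = f_X(v), where f_X(v) = |{i : xᵢ = v}|/n. -/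
open MeasureTheory Real

/-- Theorem 2: unbiasedness of the genuine frequency estimator. -/
theorem recovery_estimator_unbiased
    (d : ℕ) (hd : 2 ≤ d) (ε : ℝ) (hε : 0 < ε)
    (p q : ℝ) (hp : p = Real.exp ε / (d - 1 + Real.exp ε))
    (hq : q = 1 / (d - 1 + Real.exp ε))
    {Ω : Type*} [MeasurableSpace Ω] (μ : Measure Ω) [IsProbabilityMeasure μ]
    (n m : ℕ) (hn : 1 ≤ n) (hm : 1 ≤ m)
    (x : Fin n → Fin d)
    (X : Fin n → Ω → Fin d) (hXmeas : ∀ i, Measurable (X i))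
    (hXlaw : ∀ i, ∀ b : Fin d,
      μ {ω | X i ω = b} = ENNReal.ofReal (if b = x i then p else q))
    (Y : Fin m → Ω → Fin d) (hYmeas : ∀ j, Measurable (Y j))
    (v : Fin d)
    (η : ℝ) (hη : η = (m : ℝ) / n) :
    ∫ ω,
        ((1 + η) *
          ((1 / ((n : ℝ) + m)) *
            ((∑ i : Fin n, ((if X i ω = v then (1 : ℝ) else 0) - q) / (p - q)) +
             (∑ j : Fin m, ((if Y j ω = v then (1 : ℝ) else 0) - q) / (p - q))))
         - η *
          ((1 / (m : ℝ)) *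
            ∑ j : Fin m, ((if Y j ω = v then (1 : ℝ) else 0) - q) / (p - q))) ∂μ
      = ((Finset.univ.filter (fun i => x i = v)).card : ℝ) / n := by
  have hexp : (1:ℝ) < Real.exp ε := by
    have := Real.add_one_le_exp ε; linarith
  have hd1 : (1:ℝ) ≤ (d:ℝ) := by
    have : (2:ℝ) ≤ (d:ℝ) := by exact_mod_cast hd
    linarith
  have hden : (0:ℝ) < (d:ℝ) - 1 + Real.exp ε := by
    have := Real.exp_pos ε; linarith
  have hpq : 0 < p - q := by
    rw [hp, hq, div_sub_div_same]
    exact div_pos (by linarith) hden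
  have hq0 : 0 < q := by rw [hq]; positivity
  have hpqne : p - q ≠ 0 := ne_of_gt hpq
  have hn0 : (0:ℝ) < (n:ℝ) := by exact_mod_cast hn
  have hm0 : (0:ℝ) < (m:ℝ) := by exact_mod_cast hm
  have hn' : (n:ℝ) ≠ 0 := ne_of_gt hn0
  have hm' : (m:ℝ) ≠ 0 := ne_of_gt hm0
  have hnm : (n:ℝ) + m ≠ 0 := by positivity
  have hpt : ∀ ω : Ω,
      ((1 + η) *
          ((1 / ((n : ℝ) + m)) *
            ((∑ i : Fin n, ((if X i ω = v then (1 : ℝ) else 0) - q) / (p - q)) +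
             (∑ j : Fin m, ((if Y j ω = v then (1 : ℝ) else 0) - q) / (p - q))))
         - η *
          ((1 / (m : ℝ)) *
            ∑ j : Fin m, ((if Y j ω = v then (1 : ℝ) else 0) - q) / (p - q)))
      = (1 / (n:ℝ)) * ∑ i : Fin n, ((if X i ω = v then (1 : ℝ) else 0) - q) / (p - q) := by
    intro ω
    set A := ∑ i : Fin n, ((if X i ω = v then (1 : ℝ) else 0) - q) / (p - q) with hA
    set B := ∑ j : Fin m, ((if Y j ω = v then (1 : ℝ) else 0) - q) / (p - q) with hB
    subst hη
    field_simp
    ring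
  simp only [hpt]
  have hInd : ∀ i : Fin n, Integrable (fun ω => if X i ω = v then (1:ℝ) else 0) μ := by
    intro i
    have heq : (fun ω => if X i ω = v then (1:ℝ) else 0)
        = Set.indicator (X i ⁻¹' {v}) (fun _ => (1:ℝ)) := by
      ext ω
      by_cases h : X i ω = v <;> simp [h]
    rw [heq]
    exact (integrable_const (1:ℝ)).indicator (hXmeas i (measurableSet_singleton v))
  have hIntInd : ∀ i : Fin n,
      ∫ ω, (if X i ω = v then (1:ℝ) else 0) ∂μ = (if v = x i then p else q) := by
    intro i
    have heq : (fun ω => if X i ω = v then (1:ℝ) else 0)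
        = Set.indicator (X i ⁻¹' {v}) (fun _ => (1:ℝ)) := by
      ext ω
      by_cases h : X i ω = v <;> simp [h]
    have hs : MeasurableSet (X i ⁻¹' {v}) := hXmeas i (measurableSet_singleton v)
    have : ∫ ω, (if X i ω = v then (1:ℝ) else 0) ∂μ = (μ (X i ⁻¹' {v})).toReal := by
      rw [heq, integral_indicator hs]
      simp
      rfl
    rw [this]
    have hpre : X i ⁻¹' {v} = {ω | X i ω = v} := by ext ω; simp
    rw [hpre, hXlaw i v, ENNReal.toReal_ofReal]
    split <;> [linarith; linarith]
  have hterm : ∀ i : Fin n,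
      Integrable (fun ω => ((if X i ω = v then (1:ℝ) else 0) - q) / (p - q)) μ := by
    intro i
    exact ((hInd i).sub (integrable_const q)).div_const _
  rw [integral_const_mul, integral_finset_sum _ (fun i _ => hterm i)]
  have : ∀ i : Fin n,
      ∫ ω, ((if X i ω = v then (1:ℝ) else 0) - q) / (p - q) ∂μ
        = (if x i = v then (1:ℝ) else 0) := by
    intro i
    rw [integral_div, integral_sub (hInd i) (integrable_const q), integral_const, hIntInd i]
    simp only [probReal_univ, measure_univ, ENNReal.toReal_one, smul_eq_mul, one_mul]
    rcases eq_or_ne (x i) v with h | h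
    · simp [h, div_self hpqne]
    · simp [h, Ne.symm h]
  simp only [this]
  rw [Finset.sum_boole]
  field_simp
end

section
/- (Theorem 3, variance of the genuine frequency estimator.) Suppose the genuine reports X̃₁,…,X̃ₙ are independent, each satisfying Pr[X̃ᵢ = xᵢ] = p and Pr[X̃ᵢ = b] = q for b ≠ xᵢ. Let η = m/n. Then for every item v ∈ D, the recovery estimator (1+η)·f̃_Z(v) − η·f̃_Y(v) has variance Var[(1+η)·f̃_Z(v) − η·f̃_Y(v)] = σ_x̃², where σ_x̃² = q(1 − q)/(n(p − q)²) + f_X(v)(1 − p − q)/(n(p − q)) and f_X(v) = |{i : xᵢ = v}|/n. -/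
open MeasureTheory Real ProbabilityTheory

/-- Variance of an affine transform of a Bernoulli indicator. -/
lemma var_bernoulli_helper {Ω : Type*} [MeasurableSpace Ω] (μ : Measure Ω)
    [IsProbabilityMeasure μ] (P : Ω → Prop) [DecidablePred P]
    (hs : MeasurableSet {ω | P ω}) (r : ℝ) (hr0 : 0 ≤ r)
    (hμ : μ {ω | P ω} = ENNReal.ofReal r) (q c : ℝ) (hc : c ≠ 0) :
    variance (fun ω => ((if P ω then (1 : ℝ) else 0) - q) / c) μ
      = r * (1 - r) / c ^ 2 := by
  have hind : (fun ω => if P ω then (1 : ℝ) else 0)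
      = Set.indicator {ω | P ω} (fun _ => (1 : ℝ)) := by
    funext ω; simp [Set.indicator_apply, Set.mem_setOf_eq]
  have hint : Integrable (fun ω => if P ω then (1 : ℝ) else 0) μ := by
    rw [hind]; exact (integrable_const (1 : ℝ)).indicator hs
  have hIind : ∫ ω, (if P ω then (1 : ℝ) else 0) ∂μ = r := by
    rw [hind, integral_indicator_const _ hs, measureReal_def, hμ, ENNReal.toReal_ofReal hr0]
    simp
  have hmeas : Measurable fun ω => ((if P ω then (1 : ℝ) else 0) - q) / c :=
    (((Measurable.ite hs measurable_const measurable_const).sub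
      measurable_const).div_const c)
  have hmem : MemLp (fun ω => ((if P ω then (1 : ℝ) else 0) - q) / c) 2 μ := by
    apply MemLp.of_bound hmeas.aestronglyMeasurable ((1 + |q|) / |c|)
    filter_upwards with ω
    rw [Real.norm_eq_abs, abs_div]
    have hcpos : 0 < |c| := abs_pos.2 hc
    gcongr
    calc |(if P ω then (1 : ℝ) else 0) - q|
        ≤ |(if P ω then (1 : ℝ) else 0)| + |q| := abs_sub _ _
      _ ≤ 1 + |q| := by gcongr; by_cases h : P ω <;> simp [h]
  rw [variance_eq_sub hmem]
  have hsq : (fun ω => ((if P ω then (1 : ℝ) else 0) - q) / c) ^ 2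
      = fun ω => ((1 - 2 * q) * (if P ω then (1 : ℝ) else 0) + q ^ 2) / c ^ 2 := by
    funext ω; by_cases h : P ω <;> simp [h] <;> ring
  have h1 : ∫ ω, ((if P ω then (1 : ℝ) else 0) - q) / c ∂μ = (r - q) / c := by
    rw [integral_div, integral_sub hint (integrable_const q), hIind, integral_const]
    simp
  have h2 : ∫ ω, ((1 - 2 * q) * (if P ω then (1 : ℝ) else 0) + q ^ 2) / c ^ 2 ∂μ
      = ((1 - 2 * q) * r + q ^ 2) / c ^ 2 := by
    rw [integral_div, integral_add (hint.const_mul _) (integrable_const _),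
      integral_const_mul, hIind, integral_const]
    simp
  rw [hsq, h2, h1]
  field_simp
  ring

/-- Theorem 3: variance of the genuine frequency estimator. -/
theorem recovery_estimator_variance
    (d : ℕ) (hd : 2 ≤ d) (ε : ℝ) (hε : 0 < ε)
    (p q : ℝ) (hp : p = Real.exp ε / (d - 1 + Real.exp ε))
    (hq : q = 1 / (d - 1 + Real.exp ε))
    {Ω : Type*} [MeasurableSpace Ω] (μ : Measure Ω) [IsProbabilityMeasure μ]
    (n m : ℕ) (hn : 1 ≤ n) (hm : 1 ≤ m)
    (x : Fin n → Fin d)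
    (X : Fin n → Ω → Fin d) (hXmeas : ∀ i, Measurable (X i))
    (hXlaw : ∀ i, ∀ b : Fin d,
      μ {ω | X i ω = b} = ENNReal.ofReal (if b = x i then p else q))
    (hXindep : iIndepFun X μ)
    (Y : Fin m → Ω → Fin d) (hYmeas : ∀ j, Measurable (Y j))
    (v : Fin d)
    (η σx2 fX : ℝ) (hη : η = (m : ℝ) / n)
    (hfX : fX = ((Finset.univ.filter (fun i => x i = v)).card : ℝ) / n)
    (hσx2 : σx2 = q * (1 - q) / (n * (p - q) ^ 2) + fX * (1 - p - q) / (n * (p - q))) :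
    variance (fun ω =>
        (1 + η) *
          ((1 / ((n : ℝ) + m)) *
            ((∑ i : Fin n, ((if X i ω = v then (1 : ℝ) else 0) - q) / (p - q)) +
             (∑ j : Fin m, ((if Y j ω = v then (1 : ℝ) else 0) - q) / (p - q))))
         - η *
          ((1 / (m : ℝ)) *
            ∑ j : Fin m, ((if Y j ω = v then (1 : ℝ) else 0) - q) / (p - q))) μ
      = σx2 := by
  -- positivity facts
  have hE : (0 : ℝ) < (d : ℝ) - 1 + Real.exp ε := by
    have : (2 : ℝ) ≤ d := by exact_mod_cast hd
    have := Real.exp_pos ε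
    linarith
  have hexp1 : (1 : ℝ) < Real.exp ε := by
    rw [← Real.exp_zero]; exact Real.exp_lt_exp.2 hε
  have hpqpos : 0 < p - q := by
    rw [hp, hq, div_sub_div_same]
    exact div_pos (by linarith) hE
  have hpq : p - q ≠ 0 := ne_of_gt hpqpos
  have hp0 : 0 ≤ p := by rw [hp]; positivity
  have hq0 : 0 ≤ q := by rw [hq]; positivity
  have hn0 : (n : ℝ) ≠ 0 := by positivity
  have hm0 : (m : ℝ) ≠ 0 := by positivity
  have hnm0 : (n : ℝ) + m ≠ 0 := by positivity
  -- the estimator simplifies to the genuine-only average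
  have hfun : (fun ω =>
        (1 + η) *
          ((1 / ((n : ℝ) + m)) *
            ((∑ i : Fin n, ((if X i ω = v then (1 : ℝ) else 0) - q) / (p - q)) +
             (∑ j : Fin m, ((if Y j ω = v then (1 : ℝ) else 0) - q) / (p - q))))
         - η *
          ((1 / (m : ℝ)) *
            ∑ j : Fin m, ((if Y j ω = v then (1 : ℝ) else 0) - q) / (p - q)))
      = fun ω => ((n : ℝ))⁻¹ *
          ∑ i : Fin n, ((if X i ω = v then (1 : ℝ) else 0) - q) / (p - q) := by
    funext ω
    subst hη
    field_simp
    ring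
  rw [hfun, variance_const_mul]
  -- each summand
  set Z : Fin n → Ω → ℝ :=
    fun i ω => ((if X i ω = v then (1 : ℝ) else 0) - q) / (p - q) with hZ
  have hZmeas : ∀ i, Measurable (Z i) := fun i =>
    (((Measurable.ite ((hXmeas i) (measurableSet_singleton v)) measurable_const
      measurable_const).sub measurable_const).div_const _)
  have hZmem : ∀ i ∈ Finset.univ, MemLp (Z i) 2 μ := by
    intro i _
    apply MemLp.of_bound (hZmeas i).aestronglyMeasurable ((1 + |q|) / |p - q|)
    filter_upwards with ω
    rw [hZ]
    simp only [Real.norm_eq_abs, abs_div]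
    have hcpos : 0 < |p - q| := abs_pos.2 hpq
    gcongr
    calc |(if X i ω = v then (1 : ℝ) else 0) - q|
        ≤ |(if X i ω = v then (1 : ℝ) else 0)| + |q| := abs_sub _ _
      _ ≤ 1 + |q| := by gcongr; by_cases h : X i ω = v <;> simp [h]
  have hZindep : Set.Pairwise (↑(Finset.univ : Finset (Fin n)))
      fun i j => IndepFun (Z i) (Z j) μ := by
    intro i _ j _ hij
    exact (hXindep.indepFun hij).comp
      (Measurable.of_discrete (f := fun b : Fin d => ((if b = v then (1:ℝ) else 0) - q) / (p - q)))
      (Measurable.of_discrete (f := fun b : Fin d => ((if b = v then (1:ℝ) else 0) - q) / (p - q)))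
  have hsum : (fun ω => ∑ i : Fin n, Z i ω) = ∑ i : Fin n, Z i := by
    funext ω; simp
  rw [hsum, IndepFun.variance_sum hZmem hZindep]
  -- compute each variance
  have hvar : ∀ i : Fin n, variance (Z i) μ
      = (if x i = v then p * (1 - p) / (p - q) ^ 2 else q * (1 - q) / (p - q) ^ 2) := by
    intro i
    by_cases h : x i = v
    · rw [hZ, var_bernoulli_helper μ (fun ω => X i ω = v)
        ((hXmeas i) (measurableSet_singleton v)) p hp0 (by
          rw [hXlaw i v, if_pos h.symm]) q (p - q) hpq]
      simp [h]
    · rw [hZ, var_bernoulli_helper μ (fun ω => X i ω = v)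
        ((hXmeas i) (measurableSet_singleton v)) q hq0 (by
          rw [hXlaw i v, if_neg (fun hvx => h hvx.symm)]) q (p - q) hpq]
      simp [h]
  rw [Finset.sum_congr rfl (fun i _ => hvar i)]
  simp only [Finset.sum_ite, Finset.sum_const, nsmul_eq_mul]
  have hcard : ((Finset.univ.filter (fun i => ¬ x i = v)).card : ℝ)
      = (n : ℝ) - ((Finset.univ.filter (fun i => x i = v)).card : ℝ) := by
    have h2 : (Finset.univ.filter (fun i => x i = v)).card
        + (Finset.univ.filter (fun i => ¬ x i = v)).card = n := by
      simpa using Finset.card_filter_add_card_filter_not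
        (s := (Finset.univ : Finset (Fin n))) (p := fun i => x i = v)
    have := congrArg (fun t : ℕ => (t : ℝ)) h2
    push_cast at this
    linarith
  rw [hcard]
  subst hσx2 hfX
  field_simp
  ring
end

section
/- (Equation (31), KKT characterization of the refined frequencies — necessity.) Let D be a nonempty finite set and f̃ : D → ℝ. Let Δ = {g : D → ℝ | g(v) ≥ 0 for all v ∈ D and Σ_{v∈D} g(v) = 1}. If g* ∈ Δ minimizes the objective g ↦ Σ_{v∈D} (g(v) − f̃(v))² over Δ, and S = {v ∈ D | g*(v) > 0} is its support, then for every v ∈ S: g*(v) = f̃(v) − (Σ_{u∈S} f̃(u) − 1)/|S|. -/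
/-- Equation (31): KKT characterization of the refined frequencies (necessity). -/
theorem refined_frequency_kkt_necessity
    {D : Type*} [Fintype D] [Nonempty D] (ftil : D → ℝ)
    (g : D → ℝ)
    (hmem : (∀ v, 0 ≤ g v) ∧ ∑ v, g v = 1)
    (hmin : ∀ h : D → ℝ, ((∀ v, 0 ≤ h v) ∧ ∑ v, h v = 1) →
      ∑ v, (g v - ftil v) ^ 2 ≤ ∑ v, (h v - ftil v) ^ 2)
    (S : Finset D) (hS : S = Finset.univ.filter (fun v => 0 < g v)) :
    ∀ v ∈ S, g v = ftil v - ((∑ u ∈ S, ftil u) - 1) / S.card := by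
  classical
  obtain ⟨hg0, hg1⟩ := hmem
  -- Step 1: on the support, g v - ftil v is constant
  have key : ∀ v ∈ S, ∀ w ∈ S, g v - ftil v = g w - ftil w := by
    intro v hv w hw
    rw [hS, Finset.mem_filter] at hv hw
    have hv' : 0 < g v := hv.2
    have hw' : 0 < g w := hw.2
    by_cases hvw : v = w
    · subst hvw; ring
    by_contra hne
    set Δ : ℝ := (g w - ftil w) - (g v - ftil v) with hΔdef
    have hΔne : Δ ≠ 0 := by
      intro h0
      apply hne
      have : (g w - ftil w) - (g v - ftil v) = 0 := h0
      linarith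
    have hΔ2 : 0 < Δ ^ 2 := by positivity
    set m : ℝ := min (g v) (g w) with hmdef
    have hm : 0 < m := lt_min hv' hw'
    set t : ℝ := min (1/2) (m / |Δ|) with htdef
    have ht0 : 0 < t := lt_min (by norm_num) (div_pos hm (abs_pos.mpr hΔne))
    have ht1 : t ≤ 1/2 := min_le_left _ _
    set ε : ℝ := -t * Δ with hεdef
    have hεabs : |ε| ≤ m := by
      have h1 : |ε| = t * |Δ| := by
        rw [hεdef, abs_mul, abs_neg, abs_of_pos ht0]
      have h2 : t ≤ m / |Δ| := min_le_right _ _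
      rw [h1]
      calc t * |Δ| ≤ (m / |Δ|) * |Δ| := by
            apply mul_le_mul_of_nonneg_right h2 (abs_nonneg _)
        _ = m := by field_simp
    have hmv : m ≤ g v := min_le_left _ _
    have hmw : m ≤ g w := min_le_right _ _
    have hεle : ε ≤ m := le_trans (le_abs_self _) hεabs
    have hεge : -m ≤ ε := neg_le_of_abs_le hεabs
    set h : D → ℝ := fun u => if u = v then g v - ε else if u = w then g w + ε else g u
      with hhdef
    have hhv : h v = g v - ε := by simp [hhdef]
    have hhw : h w = g w + ε := by
      simp only [hhdef]
      rw [if_neg (fun hc => hvw hc.symm)]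
      simp
    have hho : ∀ u, u ≠ v → u ≠ w → h u = g u := by
      intro u h1 h2; simp [hhdef, h1, h2]
    have hfeas : (∀ u, 0 ≤ h u) ∧ ∑ u, h u = 1 := by
      constructor
      · intro u
        by_cases h1 : u = v
        · subst h1; rw [hhv]; linarith
        by_cases h2 : u = w
        · subst h2; rw [hhw]; linarith
        · rw [hho u h1 h2]; exact hg0 u
      · have hdiff : ∑ u, (h u - g u) = 0 := by
          have hsub : ∑ u, (h u - g u) = ∑ u ∈ ({v, w} : Finset D), (h u - g u) := by
            symm
            apply Finset.sum_subset (Finset.subset_univ _)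
            intro u _ hu
            simp only [Finset.mem_insert, Finset.mem_singleton, not_or] at hu
            rw [hho u hu.1 hu.2]; ring
          rw [hsub, Finset.sum_pair hvw, hhv, hhw]; ring
        have : ∑ u, h u = ∑ u, g u := by
          have := Finset.sum_sub_distrib (f := h) (g := g) (s := Finset.univ)
          rw [this] at hdiff
          linarith
        rw [this, hg1]
    have hle := hmin h hfeas
    have hdiff2 : ∑ u, ((h u - ftil u) ^ 2 - (g u - ftil u) ^ 2)
        = 2 * ε * Δ + 2 * ε ^ 2 := by
      have hsub : ∑ u, ((h u - ftil u) ^ 2 - (g u - ftil u) ^ 2)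
          = ∑ u ∈ ({v, w} : Finset D), ((h u - ftil u) ^ 2 - (g u - ftil u) ^ 2) := by
        symm
        apply Finset.sum_subset (Finset.subset_univ _)
        intro u _ hu
        simp only [Finset.mem_insert, Finset.mem_singleton, not_or] at hu
        rw [hho u hu.1 hu.2]; ring
      rw [hsub, Finset.sum_pair hvw, hhv, hhw, hΔdef]; ring
    have hsplit : ∑ u, ((h u - ftil u) ^ 2 - (g u - ftil u) ^ 2)
        = ∑ u, (h u - ftil u) ^ 2 - ∑ u, (g u - ftil u) ^ 2 :=
      Finset.sum_sub_distrib _ _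
    rw [hsplit] at hdiff2
    have hineq : 0 ≤ 2 * ε * Δ + 2 * ε ^ 2 := by linarith
    rw [hεdef] at hineq
    nlinarith [mul_pos ht0 hΔ2]
  -- Step 2: conclude
  intro v hv
  have hvS : v ∈ S := hv
  have hcard : 0 < S.card := Finset.card_pos.mpr ⟨v, hv⟩
  have hcardR : (0 : ℝ) < (S.card : ℝ) := by exact_mod_cast hcard
  have hsumS : ∑ u ∈ S, g u = 1 := by
    rw [← hg1, hS]
    apply Finset.sum_filter_of_ne
    intro u _ hu
    exact lt_of_le_of_ne (hg0 u) (Ne.symm hu)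
  have hconst : ∑ u ∈ S, g u = ∑ u ∈ S, (ftil u + (g v - ftil v)) := by
    apply Finset.sum_congr rfl
    intro u hu
    have := key u hu v hv
    linarith
  rw [Finset.sum_add_distrib, Finset.sum_const, nsmul_eq_mul] at hconst
  rw [hsumS] at hconst
  field_simp
  linarith [hconst]
end

section
/- (Correctness of the refinement output of Algorithm 1 — sufficiency.) Let D be a nonempty finite set, f̃ : D → ℝ, and S a nonempty subset of D. Set μ' = (Σ_{u∈S} f̃(u) − 1)/|S| and define g : D → ℝ by g(v) = f̃(v) − μ' for v ∈ S and g(v) = 0 for v ∉ S. If f̃(v) − μ' ≥ 0 for every v ∈ S and f̃(v) − μ' ≤ 0 for every v ∉ S, then g lies in the probability simplex Δ = {h : D → ℝ | h(v) ≥ 0 for all v and Σ_v h(v) = 1} and g minimizes the objective h ↦ Σ_{v∈D} (h(v) − f̃(v))² over Δ. -/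
/-- correctness of the refinement output of Algorithm 1 (sufficiency). -/
theorem refined_frequency_sufficiency
    {D : Type*} [Fintype D] [Nonempty D] [DecidableEq D] (ftil : D → ℝ)
    (S : Finset D) (hS : S.Nonempty)
    (μ' : ℝ) (hμ' : μ' = ((∑ u ∈ S, ftil u) - 1) / S.card)
    (g : D → ℝ) (hg : ∀ v, g v = if v ∈ S then ftil v - μ' else 0)
    (hpos : ∀ v ∈ S, 0 ≤ ftil v - μ')
    (hneg : ∀ v ∉ S, ftil v - μ' ≤ 0) :
    ((∀ v, 0 ≤ g v) ∧ ∑ v, g v = 1) ∧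
    ∀ h : D → ℝ, ((∀ v, 0 ≤ h v) ∧ ∑ v, h v = 1) →
      ∑ v, (g v - ftil v) ^ 2 ≤ ∑ v, (h v - ftil v) ^ 2 := by
  have hcard : (S.card : ℝ) ≠ 0 := by
    exact_mod_cast (Finset.card_pos.mpr hS).ne'
  have hgS : ∑ v ∈ S, g v = 1 := by
    have : ∑ v ∈ S, g v = ∑ v ∈ S, (ftil v - μ') :=
      Finset.sum_congr rfl fun v hv => by rw [hg v, if_pos hv]
    rw [this, Finset.sum_sub_distrib, Finset.sum_const, nsmul_eq_mul, hμ']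
    field_simp
    ring
  have hgC : ∀ v ∈ Sᶜ, g v = 0 := fun v hv => by
    rw [hg v, if_neg (Finset.mem_compl.mp hv)]
  have hsum_g : ∑ v, g v = 1 := by
    rw [← Finset.sum_add_sum_compl S, hgS, Finset.sum_eq_zero hgC, add_zero]
  have hnonneg : ∀ v, 0 ≤ g v := fun v => by
    rw [hg v]; split
    · exact hpos v ‹_›
    · exact le_refl 0
  refine ⟨⟨hnonneg, hsum_g⟩, ?_⟩
  rintro h ⟨hh0, hh1⟩
  -- cross term
  have hhS : ∑ v ∈ S, h v + ∑ v ∈ Sᶜ, h v = 1 := by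
    rw [Finset.sum_add_sum_compl, hh1]
  have cross : ∑ v, (h v - g v) * (g v - ftil v)
      = ∑ v ∈ Sᶜ, h v * (μ' - ftil v) := by
    rw [← Finset.sum_add_sum_compl S]
    have e1 : ∑ v ∈ S, (h v - g v) * (g v - ftil v)
        = -μ' * ∑ v ∈ S, h v + μ' := by
      have : ∀ v ∈ S, (h v - g v) * (g v - ftil v) = -μ' * h v + μ' * g v := by
        intro v hv
        rw [hg v, if_pos hv]; ring
      rw [Finset.sum_congr rfl this, Finset.sum_add_distrib, ← Finset.mul_sum,
        ← Finset.mul_sum, hgS, mul_one]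
    have e2 : ∑ v ∈ Sᶜ, (h v - g v) * (g v - ftil v)
        = ∑ v ∈ Sᶜ, h v * (μ' - ftil v) - μ' * ∑ v ∈ Sᶜ, h v := by
      rw [Finset.mul_sum, ← Finset.sum_sub_distrib]
      refine Finset.sum_congr rfl fun v hv => ?_
      rw [hg v, if_neg (Finset.mem_compl.mp hv)]; ring
    linear_combination e1 + e2 - μ' * hhS
  have hcross : 0 ≤ ∑ v, (h v - g v) * (g v - ftil v) := by
    rw [cross]
    refine Finset.sum_nonneg fun v hv => ?_
    have := hneg v (Finset.mem_compl.mp hv)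
    have := hh0 v
    nlinarith
  have hsq : 0 ≤ ∑ v, (h v - g v) ^ 2 :=
    Finset.sum_nonneg fun v _ => sq_nonneg _
  have decomp : ∑ v, (h v - ftil v) ^ 2
      = ∑ v, ((h v - g v) ^ 2 + 2 * ((h v - g v) * (g v - ftil v))
        + (g v - ftil v) ^ 2) := Finset.sum_congr rfl fun v _ => by ring
  rw [Finset.sum_add_distrib, Finset.sum_add_distrib, ← Finset.mul_sum] at decomp
  linarith
end
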